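/- Let n be a natural number, G a group, and ρ : G →* (V ≃ₗ[ℂ] V) a linear action of G on V = (Fin n → ℂ). Let f₁, f₂, α, β, h₁ ∈ MvPolynomial (Fin n) ℂ with f₁ homogeneous of degree d₁ and nonzero, f₂ homogeneous of degree d₂ and nonzero, α homogeneous of degree d₁, β homogeneous of degree d₂, f₁ and f₂ relatively prime (IsRelPrime f₁ f₂, i.e. no common non-unit factor), and h₁ = α·f₂ + β·f₁. Suppose fᵢ(ρ(g)v) = χᵢ(g)·fᵢ(v) for all g, v, where χ₁, χ₂ : G →* ℂˣ, and suppose Φ : G → ℂ satisfies h₁(ρ(g)v) = χ₁(g)·χ₂(g)·(f₁(v)·f₂(v)·Φ(g) + h₁(v)) for all g ∈ G, v ∈ V. Then there exist additive functions Φ₁, Φ₂ : G → ℂ (Φᵢ(g₁g₂) = Φᵢ(g₁) + Φᵢ(g₂)) such that α(ρ(g)v) = χ₁(g)·(f₁(v)·Φ₁(g) + α(v)) and β(ρ(g)v) = χ₂(g)·(f₂(v)·Φ₂(g) + β(v)) for all g ∈ G, v ∈ V; moreover, if h₁ and f₁·f₂ are relatively prime (IsRelPrime h₁ (f₁·f₂)),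 then α is relatively prime to f₁ and β is relatively prime to f₂. -/

import Mathlib

open MvPolynomial

/-- If the additive relative invariant `h₁/(f₁·f₂)` admits the partial fraction
decomposition `h₁/(f₁f₂) = α/f₁ + β/f₂` (i.e. `h₁ = α·f₂ + β·f₁`), then `α/f₁` and `β/f₂`
are themselves additive relative invariants; and if `h₁/(f₁f₂)` is in lowest terms, so are
`α/f₁` and `β/f₂`. -/
lemma aux_mul_homogeneous_same_degree_const {σ : Type*} {f r : MvPolynomial σ ℂ} {d : ℕ}
    (hf : f.IsHomogeneous d) (hf0 : f ≠ 0) (hfr : (f * r).IsHomogeneous d) :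
    ∃ c : ℂ, r = C c := by
  refine ⟨coeff 0 r, ?_⟩
  have hk : ∀ k : ℕ, k ≠ 0 → homogeneousComponent k r = 0 := by
    intro k hk0
    rcases lt_or_ge r.totalDegree k with h | h
    · exact homogeneousComponent_eq_zero _ _ h
    have hdecomp : f * r = ∑ i ∈ Finset.range (r.totalDegree + 1),
        f * homogeneousComponent i r := by
      rw [← Finset.mul_sum, sum_homogeneousComponent]
    have hcomp : homogeneousComponent (d + k) (f * r) = f * homogeneousComponent k r := by
      rw [hdecomp, map_sum, Finset.sum_eq_single k]
      · rw [homogeneousComponent_of_mem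
          ((mem_homogeneousSubmodule _ _).2 (hf.mul (homogeneousComponent_isHomogeneous k r)))]
        simp
      · intro i _ hik
        rw [homogeneousComponent_of_mem
          ((mem_homogeneousSubmodule _ _).2 (hf.mul (homogeneousComponent_isHomogeneous i r))),
          if_neg (by omega)]
      · intro hkmem
        exact absurd (Finset.mem_range.2 (Nat.lt_succ_of_le h)) hkmem
    have hzero : homogeneousComponent (d + k) (f * r) = 0 := by
      apply homogeneousComponent_eq_zero'
      intro m hm hdeg
      have : coeff m (f * r) = 0 := hfr.coeff_eq_zero (by omega)
      exact (MvPolynomial.mem_support_iff.mp hm) this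
    have : f * homogeneousComponent k r = 0 := hcomp ▸ hzero
    exact (mul_eq_zero.mp this).resolve_left hf0
  conv_lhs => rw [← sum_homogeneousComponent r]
  rw [Finset.sum_eq_single_of_mem 0 (Finset.mem_range.2 (Nat.succ_pos _))
    (fun i _ hi => hk i hi)]
  exact homogeneousComponent_zero r

lemma aux_eval_subst {n : ℕ} {G : Type*} [Group G]
    (ρ : G →* ((Fin n → ℂ) ≃ₗ[ℂ] (Fin n → ℂ))) (g : G)
    (p : MvPolynomial (Fin n) ℂ) (v : Fin n → ℂ) :
    eval v (aeval (fun i => ∑ j, C (ρ g (fun k => if k = j then 1 else 0) i) * X j :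
      Fin n → MvPolynomial (Fin n) ℂ) p) = eval (ρ g v) p := by
  set e : Fin n → (Fin n → ℂ) := fun j k => if k = j then 1 else 0 with he
  have hL : ∀ i, eval v (∑ j, C (ρ g (e j) i) * X j) = ρ g v i := by
    intro i
    have h0 : v = ∑ j, v j • e j := by
      funext k
      rw [Finset.sum_apply]
      simp [he]
    have hv : ρ g v = ∑ j, v j • ρ g (e j) := by
      conv_lhs => rw [h0]
      rw [map_sum]
      simp
    rw [hv, Finset.sum_apply]
    rw [map_sum]
    refine Finset.sum_congr rfl fun j _ => ?_
    simp [mul_comm]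
  rw [aeval_def, eval_eval₂]
  have hcomp : (eval v).comp (algebraMap ℂ (MvPolynomial (Fin n) ℂ)) = RingHom.id ℂ := by
    ext r
    simp [algebraMap_eq]
  rw [hcomp]
  have h2 : (fun s => eval v ((fun i => ∑ j, C (ρ g (e j) i) * X j) s)) = ρ g v := by
    funext i; exact hL i
  rw [h2]
  rfl

theorem additive_relative_invariant_partial_fractions
    (n : ℕ) {G : Type*} [Group G]
    (ρ : G →* ((Fin n → ℂ) ≃ₗ[ℂ] (Fin n → ℂ)))
    (d₁ d₂ : ℕ) (f₁ f₂ α β h₁ : MvPolynomial (Fin n) ℂ)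
    (hf₁ : f₁.IsHomogeneous d₁) (hf₁0 : f₁ ≠ 0)
    (hf₂ : f₂.IsHomogeneous d₂) (hf₂0 : f₂ ≠ 0)
    (hα : α.IsHomogeneous d₁) (hβ : β.IsHomogeneous d₂)
    (hrpf : IsRelPrime f₁ f₂)
    (hsum : h₁ = α * f₂ + β * f₁)
    (χ₁ χ₂ : G →* ℂˣ)
    (hrel₁ : ∀ (g : G) (v : Fin n → ℂ), eval (ρ g v) f₁ = (χ₁ g : ℂ) * eval v f₁)
    (hrel₂ : ∀ (g : G) (v : Fin n → ℂ), eval (ρ g v) f₂ = (χ₂ g : ℂ) * eval v f₂)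
    (Φ : G → ℂ)
    (hΦ : ∀ (g : G) (v : Fin n → ℂ),
      eval (ρ g v) h₁ =
        (χ₁ g : ℂ) * (χ₂ g : ℂ) * (eval v f₁ * eval v f₂ * Φ g + eval v h₁)) :
    (∃ Φ₁ Φ₂ : G → ℂ,
      (∀ g₁ g₂ : G, Φ₁ (g₁ * g₂) = Φ₁ g₁ + Φ₁ g₂) ∧
      (∀ g₁ g₂ : G, Φ₂ (g₁ * g₂) = Φ₂ g₁ + Φ₂ g₂) ∧
      (∀ (g : G) (v : Fin n → ℂ),
        eval (ρ g v) α = (χ₁ g : ℂ) * (eval v f₁ * Φ₁ g + eval v α)) ∧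
      (∀ (g : G) (v : Fin n → ℂ),
        eval (ρ g v) β = (χ₂ g : ℂ) * (eval v f₂ * Φ₂ g + eval v β))) ∧
    (IsRelPrime h₁ (f₁ * f₂) → IsRelPrime α f₁ ∧ IsRelPrime β f₂) := by
  constructor
  · -- main part
    set L : G → Fin n → MvPolynomial (Fin n) ℂ :=
      fun g i => ∑ j, C (ρ g (fun k => if k = j then 1 else 0) i) * X j with hLdef
    have key : ∀ (g : G) (p : MvPolynomial (Fin n) ℂ) (v : Fin n → ℂ),
        eval v (aeval (L g) p) = eval (ρ g v) p := fun g p v => aux_eval_subst ρ g p v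
    have hLhom : ∀ g i, (L g i).IsHomogeneous 1 := by
      intro g i
      refine IsHomogeneous.sum _ _ _ fun j _ => ?_
      exact (isHomogeneous_X _ _).C_mul _
    -- polynomial identities
    have hF1 : ∀ g, aeval (L g) f₁ = C ((χ₁ g : ℂ)) * f₁ := fun g =>
      MvPolynomial.funext fun v => by rw [key, hrel₁, eval_mul, eval_C]
    have hF2 : ∀ g, aeval (L g) f₂ = C ((χ₂ g : ℂ)) * f₂ := fun g =>
      MvPolynomial.funext fun v => by rw [key, hrel₂, eval_mul, eval_C]
    have hH : ∀ g, aeval (L g) h₁ =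
        C ((χ₁ g : ℂ) * (χ₂ g : ℂ) * Φ g) * (f₁ * f₂) + C ((χ₁ g : ℂ) * (χ₂ g : ℂ)) * h₁ :=
      fun g => MvPolynomial.funext fun v => by
        rw [key, hΦ]
        simp only [eval_add, eval_mul, eval_C]
        ring
    have main : ∀ g : G, ∃ c₁ c₂ : ℂ,
        (∀ v, eval (ρ g v) α = (χ₁ g : ℂ) * (eval v f₁ * c₁ + eval v α)) ∧
        (∀ v, eval (ρ g v) β = (χ₂ g : ℂ) * (eval v f₂ * c₂ + eval v β)) := by
      intro g
      set A := aeval (L g) α with hAdef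
      set B := aeval (L g) β with hBdef
      have u₁ : (χ₁ g : ℂ) ≠ 0 := Units.ne_zero _
      have u₂ : (χ₂ g : ℂ) ≠ 0 := Units.ne_zero _
      have hA : A.IsHomogeneous d₁ := by simpa [hAdef] using hα.aeval (L g) (hLhom g)
      have hB : B.IsHomogeneous d₂ := by simpa [hBdef] using hβ.aeval (L g) (hLhom g)
      have hE : A * (C ((χ₂ g : ℂ)) * f₂) + B * (C ((χ₁ g : ℂ)) * f₁) =
          C ((χ₁ g : ℂ)) * C ((χ₂ g : ℂ)) * C (Φ g) * (f₁ * f₂) +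
            C ((χ₁ g : ℂ)) * C ((χ₂ g : ℂ)) * (α * f₂ + β * f₁) := by
        have h0 : aeval (L g) h₁ = A * aeval (L g) f₂ + B * aeval (L g) f₁ := by
          rw [hsum, map_add, map_mul, map_mul]
        rw [hF1 g, hF2 g] at h0
        have h1 := hH g
        rw [h0, hsum] at h1
        simp only [C_mul] at h1
        linear_combination h1
      have hCinv₂ : C ((χ₂ g : ℂ)⁻¹) * C ((χ₂ g : ℂ)) = (1 : MvPolynomial (Fin n) ℂ) := by
        rw [← C_mul, inv_mul_cancel₀ u₂, C_1]
      have hCinv₁ : C ((χ₁ g : ℂ)⁻¹) * C ((χ₁ g : ℂ)) = (1 : MvPolynomial (Fin n) ℂ) := by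
        rw [← C_mul, inv_mul_cancel₀ u₁, C_1]
      have hC₂0 : (C ((χ₂ g : ℂ)) : MvPolynomial (Fin n) ℂ) ≠ 0 := by
        simp [u₂]
      have hC₁0 : (C ((χ₁ g : ℂ)) : MvPolynomial (Fin n) ℂ) ≠ 0 := by
        simp [u₁]
      have hdvdα : f₁ ∣ (A - C ((χ₁ g : ℂ)) * α) * f₂ := by
        refine ⟨C ((χ₂ g : ℂ)⁻¹) *
          (C ((χ₁ g : ℂ)) * C ((χ₂ g : ℂ)) * C (Φ g) * f₂ +
            C ((χ₁ g : ℂ)) * C ((χ₂ g : ℂ)) * β - C ((χ₁ g : ℂ)) * B), ?_⟩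
        apply mul_left_cancel₀ hC₂0
        linear_combination hE - (f₁ * (C ((χ₁ g : ℂ)) * C ((χ₂ g : ℂ)) * C (Φ g) * f₂ +
          C ((χ₁ g : ℂ)) * C ((χ₂ g : ℂ)) * β - C ((χ₁ g : ℂ)) * B)) * hCinv₂
      have hdvdβ : f₂ ∣ (B - C ((χ₂ g : ℂ)) * β) * f₁ := by
        refine ⟨C ((χ₁ g : ℂ)⁻¹) *
          (C ((χ₁ g : ℂ)) * C ((χ₂ g : ℂ)) * C (Φ g) * f₁ +
            C ((χ₁ g : ℂ)) * C ((χ₂ g : ℂ)) * α - C ((χ₂ g : ℂ)) * A), ?_⟩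
        apply mul_left_cancel₀ hC₁0
        linear_combination hE - (f₂ * (C ((χ₁ g : ℂ)) * C ((χ₂ g : ℂ)) * C (Φ g) * f₁ +
          C ((χ₁ g : ℂ)) * C ((χ₂ g : ℂ)) * α - C ((χ₂ g : ℂ)) * A)) * hCinv₁
      obtain ⟨r₁, hr₁⟩ := hrpf.dvd_of_dvd_mul_right hdvdα
      obtain ⟨r₂, hr₂⟩ := hrpf.symm.dvd_of_dvd_mul_right hdvdβ
      have hDα : (f₁ * r₁).IsHomogeneous d₁ := hr₁ ▸ (hA.sub (hα.C_mul _))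
      have hDβ : (f₂ * r₂).IsHomogeneous d₂ := hr₂ ▸ (hB.sub (hβ.C_mul _))
      obtain ⟨c₁, hc₁⟩ := aux_mul_homogeneous_same_degree_const hf₁ hf₁0 hDα
      obtain ⟨c₂, hc₂⟩ := aux_mul_homogeneous_same_degree_const hf₂ hf₂0 hDβ
      subst hc₁ hc₂
      refine ⟨(χ₁ g : ℂ)⁻¹ * c₁, (χ₂ g : ℂ)⁻¹ * c₂, fun v => ?_, fun v => ?_⟩
      · have := congrArg (eval v) hr₁
        simp only [eval_sub, eval_mul, eval_C, hAdef, key] at this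
        field_simp
        linear_combination this
      · have := congrArg (eval v) hr₂
        simp only [eval_sub, eval_mul, eval_C, hBdef, key] at this
        field_simp
        linear_combination this
    choose c₁ c₂ hc₁ hc₂ using main
    -- a point where f₁ (resp f₂) doesn't vanish
    have hex : ∀ f : MvPolynomial (Fin n) ℂ, f ≠ 0 → ∃ v, eval v f ≠ 0 := by
      intro f hf
      by_contra h
      push_neg at h
      exact hf (MvPolynomial.funext fun v => by simp [h v])
    obtain ⟨v₁, hv₁⟩ := hex f₁ hf₁0
    obtain ⟨v₂, hv₂⟩ := hex f₂ hf₂0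
    have hmulapply : ∀ (g₁ g₂ : G) (v : Fin n → ℂ), ρ (g₁ * g₂) v = ρ g₁ (ρ g₂ v) := by
      intro g₁ g₂ v
      rw [map_mul]
      rfl
    refine ⟨c₁, c₂, ?_, ?_, hc₁, hc₂⟩
    · intro g₁ g₂
      have e1 := hc₁ (g₁ * g₂) v₁
      have e2 : eval (ρ (g₁ * g₂) v₁) α =
          ((χ₁ g₁ : ℂ) * (χ₁ g₂ : ℂ)) * (eval v₁ f₁ * (c₁ g₁ + c₁ g₂) + eval v₁ α) := by
        rw [hmulapply, hc₁ g₁ (ρ g₂ v₁), hc₁ g₂ v₁, hrel₁ g₂ v₁]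
        ring
      rw [e2] at e1
      have hχ : ((χ₁ (g₁ * g₂) : ℂ)) = (χ₁ g₁ : ℂ) * (χ₁ g₂ : ℂ) := by
        rw [map_mul, Units.val_mul]
      rw [hχ] at e1
      have h3 := mul_left_cancel₀ (mul_ne_zero (Units.ne_zero (χ₁ g₁)) (Units.ne_zero (χ₁ g₂))) e1
      have h4 := add_right_cancel h3
      exact (mul_left_cancel₀ hv₁ h4).symm
    · intro g₁ g₂
      have e1 := hc₂ (g₁ * g₂) v₂
      have e2 : eval (ρ (g₁ * g₂) v₂) β =
          ((χ₂ g₁ : ℂ) * (χ₂ g₂ : ℂ)) * (eval v₂ f₂ * (c₂ g₁ + c₂ g₂) + eval v₂ β) := by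
        rw [hmulapply, hc₂ g₁ (ρ g₂ v₂), hc₂ g₂ v₂, hrel₂ g₂ v₂]
        ring
      rw [e2] at e1
      have hχ : ((χ₂ (g₁ * g₂) : ℂ)) = (χ₂ g₁ : ℂ) * (χ₂ g₂ : ℂ) := by
        rw [map_mul, Units.val_mul]
      rw [hχ] at e1
      have h3 := mul_left_cancel₀ (mul_ne_zero (Units.ne_zero (χ₂ g₁)) (Units.ne_zero (χ₂ g₂))) e1
      have h4 := add_right_cancel h3
      exact (mul_left_cancel₀ hv₂ h4).symm
  · intro hrp
    constructor
    · intro c hcα hcf₁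
      exact hrp (by rw [hsum]; exact dvd_add (hcα.mul_right f₂) (hcf₁.mul_left β))
        (hcf₁.mul_right f₂)
    · intro c hcβ hcf₂
      exact hrp (by rw [hsum]; exact dvd_add (hcf₂.mul_left α) (hcβ.mul_right f₁))
        (hcf₂.mul_left f₁)
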